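/- Let n ≥ 4 and let Y_n be a minimizer of the quantization energy among subsets of Q with n points. Then for every y ∈ Y_n, the number of generators y' ∈ Y_n with y' ≠ y whose Voronoi cell intersects the Voronoi cell of y is at most N* := 2·(3Γ₄/Γ₅)³; in particular the Voronoi cell of y has at most N* faces. Here Γ₄ := (2·12^{1/4}·16^{1/3}/(π^{1/4}·ω₃^{1/12}))·(√(1 + 2⁴·3³/(5²·10³)) − 1)^{−1/2}·(5²·10³/(2²·3³))^{1/4}, Γ₅ := (1/4)·(√(1 + 2⁴·3³/(5²·10³)) − 1)·Γ₃, Γ₃ := ω₃^{−1/5}·Γ₁^{1/5}, Γ₁ := (2/5)^{2/3}/40. -/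

import Mathlib

set_option maxHeartbeats 1000000


open MeasureTheory

noncomputable section

/-- Euclidean 3-space. -/
abbrev E3 := EuclideanSpace ℝ (Fin 3)

/-- The closed unit cube Q = [0,1]³. -/
def Qcube : Set E3 := {x | ∀ i, x i ∈ Set.Icc (0 : ℝ) 1}

/-- The quantization energy E(Y) = ∫_Q dist(x,Y)² dx. -/
def quantE (Y : Finset E3) : ℝ := ∫ x in Qcube, (Metric.infDist x (↑Y : Set E3)) ^ 2

/-- The Voronoi cell of a generator y ∈ Y, relative to Q. -/
def vorCell (Y : Finset E3) (y : E3) : Set E3 :=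
  {x ∈ Qcube | ∀ z ∈ Y, dist x y ≤ dist x z}

/-- Y is a minimizer of the quantization energy among n-point subsets of Q. -/
def IsMinimizer (n : ℕ) (Y : Finset E3) : Prop :=
  (↑Y : Set E3) ⊆ Qcube ∧ Y.card = n ∧
    ∀ Z : Finset E3, (↑Z : Set E3) ⊆ Qcube → Z.card = n → quantE Y ≤ quantE Z

/-- ω₃ = 4π/3, the volume of the unit ball in ℝ³. -/
def omega3 : ℝ := 4 * Real.pi / 3

/-- Γ₁ = (2/5)^{2/3} / 40. -/
def Gamma1 : ℝ := ((2 / 5 : ℝ) ^ ((2 : ℝ) / 3)) / 40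

/-- Γ₃ = ω₃^{-1/5} Γ₁^{1/5}. -/
def Gamma3 : ℝ := omega3 ^ (-(1 : ℝ) / 5) * Gamma1 ^ ((1 : ℝ) / 5)

/-- Γ₅ = (1/4)(√(1 + 2⁴·3³/(5²·10³)) − 1) Γ₃. -/
def Gamma5 : ℝ :=
  (1 / 4) * (Real.sqrt (1 + (2 ^ 4 * 3 ^ 3 : ℝ) / (5 ^ 2 * 10 ^ 3)) - 1) * Gamma3

/-- Γ₄, the diameter upper-bound constant. -/
def Gamma4 : ℝ :=
  (2 * (12 : ℝ) ^ ((1 : ℝ) / 4) * (16 : ℝ) ^ ((1 : ℝ) / 3) /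
      (Real.pi ^ ((1 : ℝ) / 4) * omega3 ^ ((1 : ℝ) / 12))) *
    (Real.sqrt (1 + (2 ^ 4 * 3 ^ 3 : ℝ) / (5 ^ 2 * 10 ^ 3)) - 1) ^ (-(1 : ℝ) / 2) *
    ((5 ^ 2 * 10 ^ 3 : ℝ) / (2 ^ 2 * 3 ^ 3)) ^ ((1 : ℝ) / 4)

open Metric Set in
instance : DecidableEq E3 := Classical.decEq _
open Metric Set
lemma le_infDist_finset {Z : Finset E3} (hZ : Z.Nonempty) {x : E3} {r : ℝ}
    (h : ∀ z ∈ Z, r ≤ dist x z) : r ≤ Metric.infDist x (Z : Set E3) := by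
  by_contra h'
  push_neg at h'
  obtain ⟨z, hz, hlt⟩ := (infDist_lt_iff (by exact_mod_cast hZ.to_set)).1 h'
  exact absurd (h z hz) (not_le.2 hlt)

lemma exists_nearest {Z : Finset E3} (hZ : Z.Nonempty) (x : E3) :
    ∃ z ∈ Z, Metric.infDist x (Z : Set E3) = dist x z := by
  obtain ⟨z, hz, hmin⟩ := Z.exists_min_image (fun z => dist x z) hZ
  exact ⟨z, hz, le_antisymm (infDist_le_dist_of_mem (by exact_mod_cast hz))
    (le_infDist_finset hZ hmin)⟩

lemma coord_dist_le (x y : E3) (i : Fin 3) : |x i - y i| ≤ dist x y := by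
  rw [EuclideanSpace.dist_eq]
  rw [← Real.sqrt_sq_eq_abs]
  apply Real.sqrt_le_sqrt
  have : (x i - y i) ^ 2 = dist (x i) (y i) ^ 2 := by
    rw [Real.dist_eq, sq_abs]
  rw [this]
  exact Finset.single_le_sum (f := fun j => dist (x j) (y j) ^ 2)
    (fun j _ => sq_nonneg _) (Finset.mem_univ i)

lemma dist_le_coord (x y : E3) {c : ℝ} (hc : 0 ≤ c) (h : ∀ i, |x i - y i| ≤ c) :
    dist x y ≤ c * Real.sqrt 3 := by
  rw [EuclideanSpace.dist_eq]
  have h1 : ∑ i : Fin 3, dist (x i) (y i) ^ 2 ≤ 3 * c ^ 2 := by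
    have : ∀ i : Fin 3, dist (x i) (y i) ^ 2 ≤ c ^ 2 := by
      intro i
      rw [Real.dist_eq]
      exact pow_le_pow_left₀ (abs_nonneg _) (h i) 2
    calc ∑ i : Fin 3, dist (x i) (y i) ^ 2 ≤ ∑ _i : Fin 3, c ^ 2 :=
          Finset.sum_le_sum fun i _ => this i
      _ = 3 * c ^ 2 := by simp [Finset.sum_const]
  calc Real.sqrt (∑ i : Fin 3, dist (x i) (y i) ^ 2) ≤ Real.sqrt (3 * c ^ 2) :=
        Real.sqrt_le_sqrt h1
    _ = c * Real.sqrt 3 := by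
        rw [show (3 : ℝ) * c ^ 2 = c ^ 2 * 3 by ring, Real.sqrt_mul (sq_nonneg c),
          Real.sqrt_sq hc]

lemma sqrt3_le : Real.sqrt 3 ≤ 1.74 := by
  rw [show (1.74 : ℝ) = Real.sqrt (1.74 ^ 2) by rw [Real.sqrt_sq (by norm_num)]]
  exact Real.sqrt_le_sqrt (by norm_num)

lemma dist_le_sqrt3 {x y : E3} (hx : x ∈ Qcube) (hy : y ∈ Qcube) : dist x y ≤ Real.sqrt 3 := by
  have := dist_le_coord x y (c := 1) zero_le_one (fun i => by
    have hx' := hx i; have hy' := hy i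
    simp only [Set.mem_Icc] at hx' hy'
    rw [abs_le]; constructor <;> linarith)
  simpa using this

def Box (lo hi : Fin 3 → ℝ) : Set E3 := {x | ∀ i, x i ∈ Set.Icc (lo i) (hi i)}

lemma lipschitz_coord (i : Fin 3) : LipschitzWith 1 (fun x : E3 => x i) := by
  apply LipschitzWith.of_dist_le_mul
  intro x y
  rw [Real.dist_eq]
  simpa using coord_dist_le x y i

lemma continuous_coord (i : Fin 3) : Continuous (fun x : E3 => x i) :=
  (lipschitz_coord i).continuous

lemma isClosed_Box (lo hi : Fin 3 → ℝ) : IsClosed (Box lo hi) := by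
  have : Box lo hi = ⋂ i, (fun x : E3 => x i) ⁻¹' (Set.Icc (lo i) (hi i)) := by
    ext x; simp [Box]
  rw [this]
  exact isClosed_iInter fun i => (isClosed_Icc).preimage (continuous_coord i)

lemma measurableSet_Box (lo hi : Fin 3 → ℝ) : MeasurableSet (Box lo hi) :=
  (isClosed_Box lo hi).measurableSet

lemma Box_preimage (lo hi : Fin 3 → ℝ) :
    Box lo hi = (MeasurableEquiv.toLp 2 (Fin 3 → ℝ)).symm ⁻¹'
      (Set.univ.pi fun i => Set.Icc (lo i) (hi i)) := by
  ext x
  simp only [Box, Set.mem_setOf_eq, Set.mem_preimage, Set.mem_pi, Set.mem_univ,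
    forall_true_left, true_implies]
  rfl

lemma volume_Box (lo hi : Fin 3 → ℝ) :
    volume (Box lo hi) = ∏ i, ENNReal.ofReal (hi i - lo i) := by
  rw [Box_preimage]
  rw [(EuclideanSpace.volume_preserving_symm_measurableEquiv_toLp (Fin 3)).measure_preimage
    (MeasurableSet.univ_pi fun i => measurableSet_Icc).nullMeasurableSet]
  rw [volume_pi_pi]
  simp [Real.volume_Icc]

lemma Qcube_eq_Box : Qcube = Box (fun _ => 0) (fun _ => 1) := rfl

lemma volume_Qcube : volume Qcube = 1 := by
  rw [Qcube_eq_Box, volume_Box]; simp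

lemma measurableSet_Qcube : MeasurableSet Qcube := by
  rw [Qcube_eq_Box]; exact measurableSet_Box _ _

lemma isCompact_Qcube : IsCompact Qcube := by
  apply Metric.isCompact_of_isClosed_isBounded
  · rw [Qcube_eq_Box]; exact isClosed_Box _ _
  · rw [Metric.isBounded_iff]
    refine ⟨2, fun x hx y hy => ?_⟩
    have h1 : ∀ i, |x i - y i| ≤ 1 := by
      intro i
      obtain ⟨ha, hb⟩ := hx i
      obtain ⟨hc, hd⟩ := hy i
      rw [abs_le]; constructor <;> simp at ha hb hc hd ⊢ <;> linarith
    calc dist x y ≤ 1 * Real.sqrt 3 := dist_le_coord x y zero_le_one h1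
      _ ≤ 2 := by nlinarith [Real.sq_sqrt (by norm_num : (3:ℝ) ≥ 0), Real.sqrt_nonneg 3]

def mkE3 (f : Fin 3 → ℝ) : E3 := (WithLp.equiv 2 (Fin 3 → ℝ)).symm f
@[simp] lemma mkE3_apply (f : Fin 3 → ℝ) (i : Fin 3) : mkE3 f i = f i := rfl

lemma exists_box (w : E3) (hw : w ∈ Qcube) {b : ℝ} (hb : 0 < b) (hb2 : b ≤ 1/2) :
    ∃ lo : Fin 3 → ℝ, Box lo (fun i => lo i + b) ⊆ Qcube ∧
      w ∈ Box lo (fun i => lo i + b) ∧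
      (∀ x ∈ Box lo (fun i => lo i + b), ∀ i, |x i - w i| ≤ b) ∧
      (∀ x ∈ Box lo (fun i => lo i + b), ∀ i, |x i - mkE3 (fun j => lo j + b/2) i| ≤ b/2) ∧
      volume (Box lo (fun i => lo i + b)) = ENNReal.ofReal (b ^ 3) := by
  set lo : Fin 3 → ℝ := fun i => if w i + b ≤ 1 then w i else w i - b with hlo
  have hwi : ∀ i, lo i ≤ w i ∧ w i ≤ lo i + b := by
    intro i
    by_cases h : w i + b ≤ 1 <;> simp [hlo, h] <;> linarith [hb.le]
  refine ⟨lo, ?_, ?_, ?_, ?_, ?_⟩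
  · intro x hx i
    have hxi := hx i
    obtain ⟨h0, h1⟩ := hw i
    simp only [Set.mem_Icc] at hxi ⊢
    by_cases h : w i + b ≤ 1
    · simp only [hlo, h, if_pos] at hxi
      constructor <;> linarith
    · simp only [hlo, h, if_neg, not_false_iff] at hxi
      push_neg at h
      constructor <;> linarith
  · intro i
    simp only [Set.mem_Icc]
    exact (hwi i)
  · intro x hx i
    have hxi := hx i
    simp only [Set.mem_Icc] at hxi
    obtain ⟨hA, hB⟩ := hwi i
    rw [abs_le]
    constructor <;> linarith [hxi.1, hxi.2]
  · intro x hx i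
    have hxi := hx i
    simp only [Set.mem_Icc] at hxi
    simp only [mkE3_apply]
    rw [abs_le]
    constructor <;> linarith [hxi.1, hxi.2]
  · rw [volume_Box]
    simp only [add_sub_cancel_left]
    rw [Fin.prod_univ_three]
    rw [← ENNReal.ofReal_mul hb.le, ← ENNReal.ofReal_mul (by positivity)]
    ring_nf

-- Voronoi cell basics
lemma vorCell_subset (Y : Finset E3) (y : E3) : vorCell Y y ⊆ Qcube := fun _ h => h.1

lemma isClosed_vorCell (Y : Finset E3) (y : E3) (hQ : IsClosed Qcube) :
    IsClosed (vorCell Y y) := by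
  have : vorCell Y y = Qcube ∩ ⋂ z ∈ Y, {x : E3 | dist x y ≤ dist x z} := by
    ext x
    constructor
    · rintro ⟨h1, h2⟩
      exact ⟨h1, Set.mem_iInter₂.2 h2⟩
    · rintro ⟨h1, h2⟩
      exact ⟨h1, fun z hz => Set.mem_iInter₂.1 h2 z hz⟩
  rw [this]
  apply hQ.inter
  refine isClosed_biInter fun z _ => ?_
  exact isClosed_le (continuous_id.dist continuous_const) (continuous_id.dist continuous_const)

lemma self_mem_vorCell {Y : Finset E3} (hY : ↑Y ⊆ Qcube) {y : E3} (hy : y ∈ Y) :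
    y ∈ vorCell Y y :=
  ⟨hY hy, fun z _ => by simp [dist_self, dist_nonneg]⟩

lemma exists_vorCell {Y : Finset E3} (hne : Y.Nonempty) {x : E3} (hx : x ∈ Qcube) :
    ∃ y ∈ Y, x ∈ vorCell Y y := by
  obtain ⟨z, hz, hmin⟩ := Y.exists_min_image (fun z => dist x z) hne
  exact ⟨z, hz, hx, hmin⟩

lemma infDist_eq_of_mem_vorCell {Y : Finset E3} (hne : Y.Nonempty) {y : E3} (hy : y ∈ Y)
    {x : E3} (hx : x ∈ vorCell Y y) : Metric.infDist x (Y : Set E3) = dist x y :=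
  le_antisymm (infDist_le_dist_of_mem (by exact_mod_cast hy)) (le_infDist_finset hne hx.2)

-- bisector is null
lemma volume_bisector {y y' : E3} (h : y ≠ y') :
    volume {x : E3 | dist x y = dist x y'} = 0 := by
  have hset : {x : E3 | dist x y = dist x y'} = (AffineSubspace.perpBisector y y' : Set E3) := by
    ext x
    simp [AffineSubspace.mem_perpBisector_iff_dist_eq]
  rw [hset]
  apply MeasureTheory.Measure.addHaar_affineSubspace
  intro htop
  apply h
  have : y ∈ AffineSubspace.perpBisector y y' := htop ▸ AffineSubspace.mem_top ℝ _ y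
  rw [AffineSubspace.mem_perpBisector_iff_dist_eq, dist_self] at this
  exact (dist_eq_zero.1 this.symm)

lemma volume_inter_vorCell {Y : Finset E3} {y y' : E3} (hy : y ∈ Y) (hy' : y' ∈ Y)
    (h : y ≠ y') : volume (vorCell Y y ∩ vorCell Y y') = 0 := by
  apply measure_mono_null (t := {x : E3 | dist x y = dist x y'}) _ (volume_bisector h)
  rintro x ⟨hx, hx'⟩
  exact le_antisymm (hx.2 y' hy') (hx'.2 y hy)

lemma isClosed_Qcube : IsClosed Qcube := isCompact_Qcube.isClosed

lemma measurableSet_vorCell (Y : Finset E3) (y : E3) : MeasurableSet (vorCell Y y) :=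
  (isClosed_vorCell Y y isClosed_Qcube).measurableSet

lemma volume_vorCell_ne_top (Y : Finset E3) (y : E3) : volume (vorCell Y y) ≠ ⊤ := by
  refine ne_of_lt (lt_of_le_of_lt (measure_mono (vorCell_subset Y y)) ?_)
  rw [volume_Qcube]; exact ENNReal.one_lt_top

lemma integrable_q (Z : Finset E3) {s : Set E3} (hs : s ⊆ Qcube) :
    IntegrableOn (fun x => Metric.infDist x (↑Z : Set E3) ^ 2) s volume := by
  apply IntegrableOn.mono_set _ hs
  exact (((continuous_infDist_pt (↑Z : Set E3)).pow 2).continuousOn).integrableOn_compact isCompact_Qcube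

lemma sum_vol_cells {Y : Finset E3} (hYQ : ↑Y ⊆ Qcube) (hne : Y.Nonempty) :
    ∑ y ∈ Y, volume (vorCell Y y) = 1 := by
  rw [← measure_biUnion_finset₀]
  · have : ⋃ y ∈ Y, vorCell Y y = Qcube := by
      apply Set.Subset.antisymm
      · exact Set.iUnion₂_subset fun y _ => vorCell_subset Y y
      · intro x hx
        obtain ⟨y, hy, hxy⟩ := exists_vorCell hne hx
        exact Set.mem_biUnion hy hxy
    rw [this, volume_Qcube]
  · intro y hy y' hy' hne'
    exact (volume_inter_vorCell (by exact_mod_cast hy) (by exact_mod_cast hy') hne')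
  · exact fun y _ => (measurableSet_vorCell Y y).nullMeasurableSet

/-- Removal cost lemma. -/
lemma quantE_erase_le {Y : Finset E3} {y₀ : E3} (hy₀ : y₀ ∈ Y)
    (hcard : 2 ≤ Y.card) {C : ℝ} (hC : 0 ≤ C)
    (hbound : ∀ x ∈ vorCell Y y₀, Metric.infDist x (↑(Y.erase y₀) : Set E3) ^ 2 ≤ C) :
    quantE (Y.erase y₀) ≤ quantE Y + C * (volume (vorCell Y y₀)).toReal := by
  have hne : Y.Nonempty := ⟨y₀, hy₀⟩
  set V := vorCell Y y₀ with hV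
  set f : E3 → ℝ := fun x => Metric.infDist x (↑Y : Set E3) ^ 2 with hf
  set g : E3 → ℝ := fun x => Metric.infDist x (↑(Y.erase y₀) : Set E3) ^ 2 with hg
  have hpt : ∀ x ∈ Qcube, g x ≤ f x + V.indicator (fun _ => C) x := by
    intro x hx
    by_cases hxV : x ∈ V
    · rw [Set.indicator_of_mem hxV]
      have h1 : g x ≤ C := hbound x hxV
      have h2 : 0 ≤ f x := sq_nonneg _
      linarith
    · rw [Set.indicator_of_notMem hxV, add_zero]
      -- x ∈ Qcube, x ∉ V : nearest point of Y to x is not y₀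
      obtain ⟨z, hz, hzeq⟩ := exists_nearest hne x
      have hzne : z ≠ y₀ := by
        intro hzy
        apply hxV
        refine ⟨hx, fun w hw => ?_⟩
        rw [← hzy, ← hzeq]
        exact infDist_le_dist_of_mem (by exact_mod_cast hw)
      have : Metric.infDist x (↑(Y.erase y₀) : Set E3) ≤ Metric.infDist x (↑Y : Set E3) := by
        rw [hzeq]
        refine infDist_le_dist_of_mem ?_
        have : z ∈ Y.erase y₀ := Finset.mem_erase.2 ⟨hzne, hz⟩
        exact_mod_cast this
      exact pow_le_pow_left₀ infDist_nonneg this 2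
  have hgi : IntegrableOn g Qcube volume := integrable_q _ (le_refl _)
  have hfi : IntegrableOn f Qcube volume := integrable_q _ (le_refl _)
  have hii : IntegrableOn (fun x => V.indicator (fun _ => C) x) Qcube volume := by
    apply Integrable.indicator _ (measurableSet_vorCell Y y₀)
    exact (integrableOn_const_iff).2 (Or.inr (by rw [volume_Qcube]; exact ENNReal.one_lt_top))
  calc quantE (Y.erase y₀) = ∫ x in Qcube, g x := rfl
    _ ≤ ∫ x in Qcube, (f x + V.indicator (fun _ => C) x) := by
        apply setIntegral_mono_on hgi (hfi.add hii) measurableSet_Qcube hpt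
    _ = (∫ x in Qcube, f x) + ∫ x in Qcube, V.indicator (fun _ => C) x :=
        integral_add hfi hii
    _ = quantE Y + C * (volume V).toReal := by
        congr 1
        rw [setIntegral_indicator (measurableSet_vorCell Y y₀)]
        rw [Set.inter_eq_self_of_subset_right (vorCell_subset Y y₀)]
        rw [setIntegral_const]
        simp [mul_comm]
        exact Or.inl rfl

/-- Gain lemma: inserting a point near a far location decreases energy by r^5/1000. -/
lemma quantE_insert_lt {Z : Finset E3} (hZQ : ↑Z ⊆ Qcube) (hne : Z.Nonempty)
    {w : E3} (hw : w ∈ Qcube) {r : ℝ} (hr : 0 < r)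
    (hfar : ∀ z ∈ Z, r ≤ dist w z) :
    ∃ p ∈ Qcube, p ∉ Z ∧ quantE (insert p Z) ≤ quantE Z - r ^ 5 / 1000 := by
  have hs3 : Real.sqrt 3 ≤ 1.74 := sqrt3_le
  have hs3' : (0:ℝ) ≤ Real.sqrt 3 := Real.sqrt_nonneg 3
  -- r ≤ √3
  have hrle : r ≤ 1.74 := by
    obtain ⟨z, hz⟩ := hne
    have := hfar z hz
    have h2 := dist_le_sqrt3 hw (hZQ (by exact_mod_cast hz))
    linarith
  set b : ℝ := r / 8 with hbdef
  have hb : 0 < b := by positivity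
  have hb2 : b ≤ 1/2 := by rw [hbdef]; linarith
  obtain ⟨lo, hXQ, hwX, hXw, hXp, hXvol⟩ := exists_box w hw hb hb2
  set X : Set E3 := Box lo (fun i => lo i + b) with hXdef
  set p : E3 := mkE3 (fun j => lo j + b/2) with hpdef
  have hpX : p ∈ X := by
    intro i
    simp only [hpdef, mkE3_apply, Set.mem_Icc]
    constructor <;> linarith
  have hpQ : p ∈ Qcube := hXQ hpX
  -- distance facts
  have hwinf : r ≤ Metric.infDist w (↑Z : Set E3) := le_infDist_finset hne hfar
  have hXinf : ∀ x ∈ X, r - 1.74 * b ≤ Metric.infDist x (↑Z : Set E3) := by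
    intro x hx
    have h1 : Metric.infDist w (↑Z : Set E3) ≤ Metric.infDist x (↑Z : Set E3) + dist w x :=
      infDist_le_infDist_add_dist
    have h2 : dist w x ≤ b * Real.sqrt 3 := by
      rw [dist_comm]
      exact dist_le_coord x w hb.le (hXw x hx)
    have h3 : b * Real.sqrt 3 ≤ 1.74 * b := by nlinarith
    linarith
  have hXdistp : ∀ x ∈ X, dist x p ≤ 0.87 * b := by
    intro x hx
    have := dist_le_coord x p (c := b/2) (by positivity) (hXp x hx)
    nlinarith
  -- p ∉ Z
  have hpZ : p ∉ Z := by
    intro hpZ'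
    have h0 : Metric.infDist p (↑Z : Set E3) = 0 := infDist_zero_of_mem (by exact_mod_cast hpZ')
    have h1 := hXinf p hpX
    rw [h0] at h1
    nlinarith
  refine ⟨p, hpQ, hpZ, ?_⟩
  -- integral manipulations
  set f : E3 → ℝ := fun x => Metric.infDist x (↑Z : Set E3) ^ 2 with hf
  set g : E3 → ℝ := fun x => Metric.infDist x (↑(insert p Z) : Set E3) ^ 2 with hg
  have hsub : (↑Z : Set E3) ⊆ (↑(insert p Z) : Set E3) := by
    intro z hz; simp only [Finset.coe_insert, Set.mem_insert_iff]; right; exact hz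
  have hgf : ∀ x, g x ≤ f x :=
    fun x => pow_le_pow_left₀ infDist_nonneg
      (infDist_le_infDist_of_subset hsub (by exact_mod_cast hne)) 2
  have hXQ' : X ⊆ Qcube := hXQ
  have hXm : MeasurableSet X := measurableSet_Box _ _
  have hfiQ : IntegrableOn f Qcube volume := integrable_q _ (le_refl _)
  have hgiQ : IntegrableOn g Qcube volume := integrable_q _ (le_refl _)
  have hfiX : IntegrableOn f X volume := integrable_q _ hXQ'
  have hgiX : IntegrableOn g X volume := integrable_q _ hXQ'
  have hXvol' : (volume X).toReal = b ^ 3 := by rw [hXvol, ENNReal.toReal_ofReal (by positivity)]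
  have hXvolne : volume X ≠ ⊤ := by rw [hXvol]; exact ENNReal.ofReal_ne_top
  -- ∫_X f ≥ (r - 1.74 b)^2 * b^3
  have hlow : (r - 1.74 * b) ^ 2 * b ^ 3 ≤ ∫ x in X, f x := by
    rw [← hXvol']
    apply setIntegral_ge_of_const_le_real hXm hXvolne
    · intro x hx
      have h1 := hXinf x hx
      have h2 : (0:ℝ) ≤ r - 1.74 * b := by rw [hbdef]; nlinarith
      exact pow_le_pow_left₀ h2 h1 2
    · exact hfiX
  -- ∫_X g ≤ (0.87 b)^2 * b^3
  have hupp : ∫ x in X, g x ≤ (0.87 * b) ^ 2 * b ^ 3 := by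
    have : ∀ x ∈ X, g x ≤ (0.87 * b) ^ 2 := by
      intro x hx
      have h1 : Metric.infDist x (↑(insert p Z) : Set E3) ≤ dist x p :=
        infDist_le_dist_of_mem (by simp)
      have h2 : (0:ℝ) ≤ dist x p := dist_nonneg
      have h3 := hXdistp x hx
      calc g x ≤ dist x p ^ 2 := pow_le_pow_left₀ infDist_nonneg h1 2
        _ ≤ (0.87 * b) ^ 2 := pow_le_pow_left₀ h2 h3 2
    calc ∫ x in X, g x ≤ ∫ _x in X, (0.87 * b) ^ 2 :=
          setIntegral_mono_on hgiX ((integrableOn_const_iff).2 (Or.inr hXvolne.lt_top))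
            hXm this
      _ = (0.87 * b) ^ 2 * b ^ 3 := by rw [setIntegral_const, measureReal_def, hXvol', smul_eq_mul, mul_comm]
  -- split the integral
  have hsplit : ∫ x in Qcube, g x = (∫ x in Qcube \ X, g x) + ∫ x in X, g x := by
    rw [integral_diff hXm hgiQ hXQ']
    ring
  have hsplitf : ∫ x in Qcube \ X, f x = (∫ x in Qcube, f x) - ∫ x in X, f x :=
    integral_diff hXm hfiQ hXQ'
  have hmono : ∫ x in Qcube \ X, g x ≤ ∫ x in Qcube \ X, f x := by
    apply setIntegral_mono_on (hgiQ.mono_set Set.diff_subset) (hfiQ.mono_set Set.diff_subset)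
      (measurableSet_Qcube.diff hXm) (fun x _ => hgf x)
  have key : quantE (insert p Z) ≤ quantE Z - ((r - 1.74*b)^2 - (0.87*b)^2) * b^3 := by
    have : quantE (insert p Z) = ∫ x in Qcube, g x := rfl
    rw [this]
    have hqz : quantE Z = ∫ x in Qcube, f x := rfl
    rw [hsplit, hqz]
    have := hsplitf
    nlinarith [hlow, hupp, hmono]
  refine le_trans key ?_
  have hbb : ((r - 1.74*b)^2 - (0.87*b)^2) * b^3 ≥ r^5/1000 := by
    rw [hbdef]
    nlinarith [hr, sq_nonneg r, pow_pos hr 5]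
  linarith

/-- If the cell of y₀ has small volume, then y₀ has a nearby other generator. -/
lemma erase_infDist_le {Y : Finset E3} {y₀ : E3} (hy₀Q : y₀ ∈ Qcube) {t : ℝ}
    (ht : 0 < t) (ht1 : t ≤ 1)
    (hvol : (volume (vorCell Y y₀)).toReal < t ^ 3 / 8) :
    Metric.infDist y₀ (↑(Y.erase y₀) : Set E3) ≤ 2 * t := by
  have hb : 0 < t/2 := by linarith
  have hb2 : t/2 ≤ 1/2 := by linarith
  obtain ⟨lo, hXQ, hwX, hXw, _, hXvol⟩ := exists_box y₀ hy₀Q hb hb2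
  set X : Set E3 := Box lo (fun i => lo i + t/2) with hXdef
  have hnotsub : ¬ X ⊆ vorCell Y y₀ := by
    intro hsub
    have h1 : volume X ≤ volume (vorCell Y y₀) := measure_mono hsub
    rw [hXvol] at h1
    have h2 : ((t/2) ^ 3 : ℝ) ≤ (volume (vorCell Y y₀)).toReal := by
      rw [← ENNReal.toReal_ofReal (by positivity : (0:ℝ) ≤ (t/2)^3)]
      exact ENNReal.toReal_mono (volume_vorCell_ne_top Y y₀) h1
    nlinarith
  obtain ⟨x, hxX, hxV⟩ := Set.not_subset.1 hnotsub
  have hxQ : x ∈ Qcube := hXQ hxX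
  have hxd : dist x y₀ ≤ t := by
    have := dist_le_coord x y₀ hb.le (hXw x hxX)
    nlinarith [sqrt3_le, Real.sqrt_nonneg 3]
  simp only [vorCell, Set.mem_setOf_eq, not_and, hxQ, true_implies, not_forall] at hxV
  obtain ⟨z, hzY, hzd⟩ := hxV
  push_neg at hzd
  have hzne : z ≠ y₀ := by
    intro h; rw [h] at hzd; exact lt_irrefl _ hzd
  calc Metric.infDist y₀ (↑(Y.erase y₀) : Set E3) ≤ dist y₀ z := by
        apply infDist_le_dist_of_mem
        have : z ∈ Y.erase y₀ := Finset.mem_erase.2 ⟨hzne, hzY⟩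
        exact_mod_cast this
    _ ≤ dist y₀ x + dist x z := dist_triangle y₀ x z
    _ ≤ t + t := by
        rw [dist_comm y₀ x]
        have h1 : dist x z < dist x y₀ := hzd
        gcongr <;> linarith
    _ = 2 * t := by ring

lemma vol_vorCell_pos {Y : Finset E3} (hYQ : ↑Y ⊆ Qcube) {y₀ : E3} (hy₀ : y₀ ∈ Y)
    (hcard : 2 ≤ Y.card) : 0 < (volume (vorCell Y y₀)).toReal := by
  by_contra h
  push_neg at h
  have h0 : (volume (vorCell Y y₀)).toReal = 0 := le_antisymm h ENNReal.toReal_nonneg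
  have hy₀Q : y₀ ∈ Qcube := hYQ hy₀
  have herase : (Y.erase y₀).Nonempty := by
    rw [← Finset.card_pos, Finset.card_erase_of_mem hy₀]; omega
  have hclosed : IsClosed (↑(Y.erase y₀) : Set E3) := (Y.erase y₀).finite_toSet.isClosed
  have hpos : 0 < Metric.infDist y₀ (↑(Y.erase y₀) : Set E3) := by
    rw [← hclosed.notMem_iff_infDist_pos (by exact_mod_cast herase)]
    simp
  have hle : ∀ t : ℝ, 0 < t → t ≤ 1 → Metric.infDist y₀ (↑(Y.erase y₀) : Set E3) ≤ 2*t := by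
    intro t ht ht1
    exact erase_infDist_le hy₀Q ht ht1 (by rw [h0]; positivity)
  set s := Metric.infDist y₀ (↑(Y.erase y₀) : Set E3)
  rcases le_or_gt s 2 with hs | hs
  · have := hle (s/4) (by linarith) (by linarith)
    linarith
  · have := hle 1 one_pos le_rfl
    linarith

lemma exists_far (W : Finset E3) {ρ : ℝ} (hρ : 0 < ρ)
    (hvol : (W.card : ℝ) * (2*ρ)^3 < 1) :
    ∃ w ∈ Qcube, ∀ z ∈ W, ρ ≤ dist w z := by
  by_contra h
  push_neg at h
  have hcover : Qcube ⊆ ⋃ z ∈ W, Box (fun i => z i - ρ) (fun i => z i + ρ) := by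
    intro w hw
    obtain ⟨z, hzW, hzd⟩ := h w hw
    refine Set.mem_biUnion hzW ?_
    intro i
    have := coord_dist_le w z i
    have habs : |w i - z i| ≤ ρ := by linarith
    rw [abs_le] at habs
    simp only [Set.mem_Icc]
    constructor <;> linarith [habs.1, habs.2]
  have h1 : (1 : ENNReal) ≤ ∑ z ∈ W, volume (Box (fun i => z i - ρ) (fun i => z i + ρ)) := by
    rw [← volume_Qcube]
    exact le_trans (measure_mono hcover) (measure_biUnion_finset_le _ _)
  have h2 : ∀ z : E3, volume (Box (fun i => z i - ρ) (fun i => z i + ρ))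
      = ENNReal.ofReal ((2*ρ)^3) := by
    intro z
    rw [volume_Box]
    rw [Fin.prod_univ_three]
    have : ∀ i : Fin 3, (z i + ρ - (z i - ρ)) = 2*ρ := fun i => by ring
    rw [this 0, this 1, this 2, ← ENNReal.ofReal_mul (by positivity),
      ← ENNReal.ofReal_mul (by positivity)]
    ring_nf
  rw [Finset.sum_congr rfl (fun z _ => h2 z), Finset.sum_const, nsmul_eq_mul] at h1
  have h3 : (W.card : ENNReal) * ENNReal.ofReal ((2*ρ)^3) = ENNReal.ofReal ((W.card : ℝ) * (2*ρ)^3) := by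
    rw [ENNReal.ofReal_mul (by positivity)]
    congr 1
    exact (ENNReal.ofReal_natCast _).symm
  rw [h3] at h1
  have h4 : (1 : ENNReal) = ENNReal.ofReal 1 := by simp
  rw [h4] at h1
  have := (ENNReal.ofReal_le_ofReal_iff (by positivity)).1 h1
  linarith

lemma vol_vorCell_le (Y : Finset E3) (y : E3) {R : ℝ} (hR : 0 ≤ R)
    (h : ∀ x ∈ vorCell Y y, dist x y ≤ R) :
    (volume (vorCell Y y)).toReal ≤ 8 * R^3 := by
  have hsub : vorCell Y y ⊆ Box (fun i => y i - R) (fun i => y i + R) := by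
    intro x hx i
    have h1 := coord_dist_le x y i
    have h2 := h x hx
    rw [Set.mem_Icc]
    rw [abs_le] at h1
    show y i - R ≤ x i ∧ x i ≤ y i + R
    constructor <;> [linarith [h1.1]; linarith [h1.2]]
  have h1 : volume (vorCell Y y) ≤ ENNReal.ofReal ((2*R)^3) := by
    refine le_trans (measure_mono hsub) ?_
    rw [volume_Box, Fin.prod_univ_three]
    have : ∀ i : Fin 3, (y i + R - (y i - R)) = 2*R := fun i => by ring
    rw [this 0, this 1, this 2, ← ENNReal.ofReal_mul (by positivity),
      ← ENNReal.ofReal_mul (by positivity)]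
    ring_nf
    exact le_rfl
  calc (volume (vorCell Y y)).toReal ≤ (ENNReal.ofReal ((2*R)^3)).toReal :=
        ENNReal.toReal_mono ENNReal.ofReal_ne_top h1
    _ = (2*R)^3 := ENNReal.toReal_ofReal (by positivity)
    _ = 8 * R^3 := by ring

lemma rpow_ub {a c : ℝ} (ha : 0 ≤ a) (hc : 0 ≤ c) (k : ℕ) (hk : k ≠ 0) (h : a ≤ c ^ k) :
    a ^ ((1:ℝ)/k) ≤ c := by
  have h1 : a ^ ((1:ℝ)/k) ≤ (c ^ k : ℝ) ^ ((1:ℝ)/k) :=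
    Real.rpow_le_rpow ha h (by positivity)
  rwa [← Real.rpow_natCast c k, ← Real.rpow_mul hc,
    mul_one_div, div_self (by exact_mod_cast hk : (k:ℝ) ≠ 0), Real.rpow_one] at h1

lemma rpow_lb {a c : ℝ} (hc : 0 ≤ c) (k : ℕ) (hk : k ≠ 0) (h : c ^ k ≤ a) :
    c ≤ a ^ ((1:ℝ)/k) := by
  have h1 : (c ^ k : ℝ) ^ ((1:ℝ)/k) ≤ a ^ ((1:ℝ)/k) :=
    Real.rpow_le_rpow (by positivity) h (by positivity)
  rwa [← Real.rpow_natCast c k, ← Real.rpow_mul hc,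
    mul_one_div, div_self (by exact_mod_cast hk : (k:ℝ) ≠ 0), Real.rpow_one] at h1

lemma numeric_main : (10:ℝ)^16 ≤ 2 * (3 * Gamma4 / Gamma5) ^ 3 := by
  have hpi_lo : (3.14 : ℝ) ≤ Real.pi := by linarith [Real.pi_gt_d2]
  have hpi_hi : Real.pi ≤ 3.15 := by linarith [Real.pi_lt_d2]
  have hom_lo : (4:ℝ) ≤ omega3 := by unfold omega3; linarith
  have hom_hi : omega3 ≤ 4.2 := by unfold omega3; linarith
  have hom_pos : (0:ℝ) < omega3 := by linarith
  set sq : ℝ := Real.sqrt (1 + (2 ^ 4 * 3 ^ 3 : ℝ) / (5 ^ 2 * 10 ^ 3)) with hsq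
  have harg : (1 + (2 ^ 4 * 3 ^ 3 : ℝ) / (5 ^ 2 * 10 ^ 3)) = 1.01728 := by norm_num
  have hsq_lo : 1.0086 ≤ sq := by
    rw [hsq, harg]
    have : (1.0086:ℝ) = Real.sqrt (1.0086^2) := (Real.sqrt_sq (by norm_num)).symm
    rw [this]
    exact Real.sqrt_le_sqrt (by norm_num)
  have hsq_hi : sq ≤ 1.0087 := by
    rw [hsq, harg]
    have : (1.0087:ℝ) = Real.sqrt (1.0087^2) := (Real.sqrt_sq (by norm_num)).symm
    rw [this]
    exact Real.sqrt_le_sqrt (by norm_num)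
  -- Gamma4 lower bound
  have h12 : (1.5:ℝ) ≤ (12:ℝ) ^ ((1:ℝ)/4) := rpow_lb (by norm_num) 4 (by norm_num) (by norm_num)
  have h16 : (2.5:ℝ) ≤ (16:ℝ) ^ ((1:ℝ)/3) := rpow_lb (by norm_num) 3 (by norm_num) (by norm_num)
  have hpi4 : Real.pi ^ ((1:ℝ)/4) ≤ 1.34 :=
    rpow_ub (by linarith) (by norm_num) 4 (by norm_num) (by nlinarith)
  have hom12 : omega3 ^ ((1:ℝ)/12) ≤ 1.13 :=
    rpow_ub (by linarith) (by norm_num) 12 (by norm_num) (by nlinarith)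
  have hpi4_pos : (0:ℝ) < Real.pi ^ ((1:ℝ)/4) := Real.rpow_pos_of_pos (by linarith) _
  have hom12_pos : (0:ℝ) < omega3 ^ ((1:ℝ)/12) := Real.rpow_pos_of_pos hom_pos _
  have hA : (4.9:ℝ) ≤ 2 * (12 : ℝ) ^ ((1 : ℝ) / 4) * (16 : ℝ) ^ ((1 : ℝ) / 3) /
      (Real.pi ^ ((1 : ℝ) / 4) * omega3 ^ ((1 : ℝ) / 12)) := by
    rw [le_div_iff₀ (by positivity)]
    have h1 : Real.pi ^ ((1:ℝ)/4) * omega3 ^ ((1:ℝ)/12) ≤ 1.34 * 1.13 := by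
      apply mul_le_mul hpi4 hom12 hom12_pos.le (by norm_num)
    have h2 : (7.5:ℝ) ≤ 2 * (12 : ℝ) ^ ((1 : ℝ) / 4) * (16 : ℝ) ^ ((1 : ℝ) / 3) := by
      have ha : (0:ℝ) ≤ (12:ℝ) ^ ((1:ℝ)/4) := by positivity
      nlinarith
    nlinarith [hpi4_pos, hom12_pos]
  -- second factor of Gamma4
  have hd_lo : (0.0086:ℝ) ≤ sq - 1 := by linarith
  have hd_hi : sq - 1 ≤ 0.0087 := by linarith
  have hd_pos : (0:ℝ) < sq - 1 := by linarith
  have hB : (10.7:ℝ) ≤ (sq - 1) ^ (-(1:ℝ)/2) := by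
    have hhalf : (sq - 1) ^ ((1:ℝ)/2) ≤ 1/10.7 := by
      apply rpow_ub hd_pos.le (by norm_num) 2 (by norm_num)
      nlinarith
    have hpos : (0:ℝ) < (sq - 1) ^ ((1:ℝ)/2) := Real.rpow_pos_of_pos hd_pos _
    have : (sq - 1) ^ (-(1:ℝ)/2) = ((sq - 1) ^ ((1:ℝ)/2))⁻¹ := by
      rw [show (-(1:ℝ)/2) = -((1:ℝ)/2) by norm_num, Real.rpow_neg hd_pos.le]
    rw [this]
    rw [le_inv_comm₀ (by norm_num) hpos]
    calc (sq-1) ^ ((1:ℝ)/2) ≤ 1/10.7 := hhalf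
      _ ≤ 10.7⁻¹ := by norm_num
  have hB_pos : (0:ℝ) < (sq - 1) ^ (-(1:ℝ)/2) := Real.rpow_pos_of_pos hd_pos _
  -- third factor
  have hCarg : ((5 ^ 2 * 10 ^ 3 : ℝ) / (2 ^ 2 * 3 ^ 3)) = 25000/108 := by norm_num
  have hC : (3.8:ℝ) ≤ ((5 ^ 2 * 10 ^ 3 : ℝ) / (2 ^ 2 * 3 ^ 3)) ^ ((1:ℝ)/4) := by
    rw [hCarg]
    exact rpow_lb (by norm_num) 4 (by norm_num) (by norm_num)
  have hG4 : (199:ℝ) ≤ Gamma4 := by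
    unfold Gamma4
    rw [← hsq]
    have hA0 : (0:ℝ) ≤ 2 * (12 : ℝ) ^ ((1 : ℝ) / 4) * (16 : ℝ) ^ ((1 : ℝ) / 3) /
        (Real.pi ^ ((1 : ℝ) / 4) * omega3 ^ ((1 : ℝ) / 12)) := by linarith
    have hAB : (4.9*10.7:ℝ) ≤ (2 * (12 : ℝ) ^ ((1 : ℝ) / 4) * (16 : ℝ) ^ ((1 : ℝ) / 3) /
        (Real.pi ^ ((1 : ℝ) / 4) * omega3 ^ ((1 : ℝ) / 12))) * (sq - 1) ^ (-(1:ℝ)/2) :=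
      mul_le_mul hA hB (by norm_num) hA0
    have hABC := mul_le_mul hAB hC (by norm_num)
      (by nlinarith : (0:ℝ) ≤ (2 * (12 : ℝ) ^ ((1 : ℝ) / 4) * (16 : ℝ) ^ ((1 : ℝ) / 3) /
        (Real.pi ^ ((1 : ℝ) / 4) * omega3 ^ ((1 : ℝ) / 12))) * (sq - 1) ^ (-(1:ℝ)/2))
    nlinarith [hABC]
  -- Gamma3 / Gamma5 upper bounds
  have hG1_hi : Gamma1 ≤ 0.01375 := by
    unfold Gamma1
    have : ((2/5:ℝ)) ^ ((2:ℝ)/3) ≤ 0.55 := by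
      rw [show ((2:ℝ)/3) = (2:ℝ) * (1/3) by norm_num, Real.rpow_mul (by norm_num),
        show ((2:ℝ)/5) ^ (2:ℝ) = 0.16 by
          rw [show (2:ℝ) = ((2:ℕ):ℝ) by norm_num, Real.rpow_natCast]; norm_num]
      exact rpow_ub (by norm_num) (by norm_num) 3 (by norm_num) (by norm_num)
    linarith
  have hG1_pos : (0:ℝ) < Gamma1 := by unfold Gamma1; positivity
  have hom5 : omega3 ^ (-(1:ℝ)/5) ≤ 0.765 := by
    have h1 : (1.31:ℝ) ≤ omega3 ^ ((1:ℝ)/5) := by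
      apply rpow_lb (by norm_num) 5 (by norm_num)
      nlinarith
    have hpos : (0:ℝ) < omega3 ^ ((1:ℝ)/5) := Real.rpow_pos_of_pos hom_pos _
    have heq : omega3 ^ (-(1:ℝ)/5) = (omega3 ^ ((1:ℝ)/5))⁻¹ := by
      rw [show (-(1:ℝ)/5) = -((1:ℝ)/5) by norm_num, Real.rpow_neg hom_pos.le]
    rw [heq]
    rw [inv_le_comm₀ hpos (by norm_num)]
    linarith
  have hG15 : Gamma1 ^ ((1:ℝ)/5) ≤ 0.43 := by
    apply rpow_ub hG1_pos.le (by norm_num) 5 (by norm_num)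
    nlinarith
  have hG3_hi : Gamma3 ≤ 0.33 := by
    unfold Gamma3
    have h1 : (0:ℝ) < omega3 ^ (-(1:ℝ)/5) := Real.rpow_pos_of_pos hom_pos _
    have h2 : (0:ℝ) ≤ Gamma1 ^ ((1:ℝ)/5) := by positivity
    nlinarith
  have hG3_pos : (0:ℝ) < Gamma3 := by
    unfold Gamma3
    exact mul_pos (Real.rpow_pos_of_pos hom_pos _) (Real.rpow_pos_of_pos hG1_pos _)
  have hG5_hi : Gamma5 ≤ 0.00072 := by
    unfold Gamma5
    rw [← hsq]
    nlinarith
  have hG5_pos : (0:ℝ) < Gamma5 := by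
    unfold Gamma5
    rw [← hsq]
    positivity
  -- conclude
  have hq : (820000:ℝ) ≤ 3 * Gamma4 / Gamma5 := by
    rw [le_div_iff₀ hG5_pos]
    nlinarith
  have hq0 : (0:ℝ) ≤ (820000:ℝ) := by norm_num
  calc (10:ℝ)^16 ≤ 2 * (820000:ℝ)^3 := by norm_num
    _ ≤ 2 * (3 * Gamma4 / Gamma5)^3 := by
        have := pow_le_pow_left₀ hq0 hq 3
        linarith


theorem stmt_6 (n : ℕ) (hn : 4 ≤ n) (Y : Finset E3) (hY : IsMinimizer n Y)
    (y : E3) (hyY : y ∈ Y) :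
    ({y' : E3 | y' ∈ Y ∧ y' ≠ y ∧ (vorCell Y y' ∩ vorCell Y y).Nonempty}.ncard : ℝ) ≤
      2 * (3 * Gamma4 / Gamma5) ^ 3 := by
  classical
  obtain ⟨hYQ, hcard, hmin⟩ := hY
  have hne : Y.Nonempty := Finset.card_pos.1 (by omega)
  set T : Finset E3 :=
    Y.filter (fun y' => y' ≠ y ∧ (vorCell Y y' ∩ vorCell Y y).Nonempty) with hT
  have hsetT : {y' : E3 | y' ∈ Y ∧ y' ≠ y ∧ (vorCell Y y' ∩ vorCell Y y).Nonempty} = ↑T := by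
    ext y'
    simp only [hT, Finset.coe_filter, Set.mem_setOf_eq]
  rw [hsetT, Set.ncard_coe_finset]
  have hRHS := numeric_main
  have hTY : T ⊆ Y := Finset.filter_subset _ _
  rcases le_or_gt (n:ℝ) ((10:ℝ)^16) with hsmall | hbig
  · have h1 : (T.card : ℝ) ≤ (n : ℝ) := by
      have := Finset.card_le_card hTY
      rw [hcard] at this
      exact_mod_cast this
    linarith
  -- main case : n > 10^16
  have hn1 : (1:ℝ) ≤ (n:ℝ) := by
    have : (1:ℕ) ≤ n := by omega
    exact_mod_cast this
  have hnpos : (0:ℝ) < (n:ℝ) := by linarith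
  set u : ℝ := ((1:ℝ)/n) ^ ((1:ℝ)/3) with hu
  have hupos : 0 < u := Real.rpow_pos_of_pos (by positivity) _
  have hu3 : u ^ (3:ℕ) = 1/(n:ℝ) := by
    rw [hu, ← Real.rpow_natCast (((1:ℝ)/n) ^ ((1:ℝ)/3)) 3, ← Real.rpow_mul (by positivity)]
    norm_num
  have hnn : (1:ℝ)/n ≤ 1/(10:ℝ)^16 := by
    rw [div_le_div_iff₀ hnpos (by norm_num)]
    linarith
  have huval : u ≤ 0.00001 := by
    apply (pow_le_pow_iff_left₀ hupos.le (by norm_num) (by norm_num : (3:ℕ) ≠ 0)).1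
    rw [hu3]
    calc (1:ℝ)/n ≤ 1/(10:ℝ)^16 := hnn
      _ ≤ (0.00001:ℝ)^(3:ℕ) := by norm_num
  -- the set of cell radii
  set S : Set ℝ := {d | ∃ y' ∈ Y, ∃ x ∈ vorCell Y y', d = dist x y'} with hS
  have hS0 : (0:ℝ) ∈ S := ⟨y, hyY, y, self_mem_vorCell hYQ hyY, (dist_self y).symm⟩
  have hSne : S.Nonempty := ⟨0, hS0⟩
  have hbdd : BddAbove S := by
    refine ⟨1.74, ?_⟩
    rintro d ⟨y', hy', x, hx, rfl⟩
    calc dist x y' ≤ Real.sqrt 3 := dist_le_sqrt3 (vorCell_subset Y y' hx) (hYQ hy')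
      _ ≤ 1.74 := sqrt3_le
  set R : ℝ := sSup S with hR
  have hR0 : 0 ≤ R := le_csSup hbdd hS0
  have hRub : ∀ y' ∈ Y, ∀ x ∈ vorCell Y y', dist x y' ≤ R :=
    fun y' hy' x hx => le_csSup hbdd ⟨y', hy', x, hx, rfl⟩
  -- cell volumes
  set v : E3 → ℝ := fun y' => (volume (vorCell Y y')).toReal with hv
  have hsumv : ∑ y' ∈ Y, v y' = 1 := by
    rw [hv, ← ENNReal.toReal_sum (fun y' _ => volume_vorCell_ne_top Y y'),
      sum_vol_cells hYQ hne]
    simp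
  have hvpos : ∀ y' ∈ Y, 0 < v y' := fun y' hy' => vol_vorCell_pos hYQ hy' (by omega)
  have hvle : ∀ y' ∈ Y, v y' ≤ 8 * R^3 := fun y' hy' => vol_vorCell_le Y y' hR0 (hRub y' hy')
  -- a cell with volume at most 1/n
  obtain ⟨y₀, hy₀Y, hy₀v⟩ : ∃ y₀ ∈ Y, v y₀ ≤ 1/(n:ℝ) := by
    apply Finset.exists_le_of_sum_le hne
    rw [hsumv, Finset.sum_const, nsmul_eq_mul, hcard]
    rw [mul_one_div, div_self (ne_of_gt hnpos)]
  have hv₀pos : 0 < v y₀ := hvpos y₀ hy₀Y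
  set t₀ : ℝ := (16 * v y₀) ^ ((1:ℝ)/3) with ht₀def
  have ht₀pos : 0 < t₀ := Real.rpow_pos_of_pos (by linarith) _
  have ht₀3 : t₀ ^ (3:ℕ) = 16 * v y₀ := by
    rw [ht₀def, ← Real.rpow_natCast ((16 * v y₀) ^ ((1:ℝ)/3)) 3,
      ← Real.rpow_mul (by linarith)]
    norm_num
  have ht₀u : t₀ ≤ 3 * u := by
    apply (pow_le_pow_iff_left₀ ht₀pos.le (by positivity) (by norm_num : (3:ℕ) ≠ 0)).1
    rw [ht₀3]
    have h1 : (3*u)^(3:ℕ) = 27 * u^(3:ℕ) := by ring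
    rw [h1, hu3]
    linarith
  have ht₀1 : t₀ ≤ 1 := by linarith [huval]
  have hs' : Metric.infDist y₀ (↑(Y.erase y₀) : Set E3) ≤ 2*t₀ := by
    apply erase_infDist_le (hYQ hy₀Y) ht₀pos ht₀1
    have : t₀^(3:ℕ)/8 = 2 * v y₀ := by rw [ht₀3]; ring
    rw [this]
    show v y₀ < 2 * v y₀
    linarith
  have hcost : quantE (Y.erase y₀) ≤ quantE Y + (R + 2*t₀)^2 * v y₀ := by
    apply quantE_erase_le hy₀Y (by omega) (by positivity)
    intro x hx
    have h1 : Metric.infDist x (↑(Y.erase y₀) : Set E3)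
        ≤ Metric.infDist y₀ (↑(Y.erase y₀) : Set E3) + dist x y₀ :=
      infDist_le_infDist_add_dist
    have h2 : dist x y₀ ≤ R := hRub y₀ hy₀Y x hx
    have h3 : Metric.infDist x (↑(Y.erase y₀) : Set E3) ≤ R + 2*t₀ := by linarith
    exact pow_le_pow_left₀ infDist_nonneg h3 2
  have hecard : (Y.erase y₀).card = n - 1 := by
    rw [Finset.card_erase_of_mem hy₀Y, hcard]
  have heQ : (↑(Y.erase y₀) : Set E3) ⊆ Qcube := by
    refine subset_trans ?_ hYQ
    exact_mod_cast Finset.coe_subset.2 (Finset.erase_subset _ _)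
  have hene : (Y.erase y₀).Nonempty := by
    rw [← Finset.card_pos, hecard]; omega
  -- every radius is small
  have hkey : ∀ d ∈ S, d^(5:ℕ) ≤ 1000 * ((R + 2*t₀)^2 * v y₀) := by
    rintro d ⟨y', hy', x, hx, rfl⟩
    rcases eq_or_lt_of_le (dist_nonneg : (0:ℝ) ≤ dist x y') with h0 | hdpos
    · rw [← h0]
      have : (0:ℝ)^(5:ℕ) = 0 := by norm_num
      rw [this]
      positivity
    obtain ⟨p, hpQ, hpe, hple⟩ := quantE_insert_lt heQ hene (vorCell_subset Y y' hx) hdpos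
      (fun z hz => hx.2 z (Finset.mem_of_mem_erase hz))
    have hZcard : (insert p (Y.erase y₀)).card = n := by
      rw [Finset.card_insert_of_notMem hpe, hecard]; omega
    have hZQ : (↑(insert p (Y.erase y₀)) : Set E3) ⊆ Qcube := by
      rw [Finset.coe_insert]
      exact Set.insert_subset hpQ heQ
    have hmin' := hmin _ hZQ hZcard
    have h5 : dist x y' ^ 5 / 1000 ≤ (R + 2*t₀)^2 * v y₀ := by linarith
    linarith
  -- R ≤ 16 u
  have hv₀u : v y₀ ≤ u^(3:ℕ) := by rw [hu3]; exact hy₀v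
  have hR16 : R ≤ 16 * u := by
    rcases le_or_gt R (6*u) with h6 | h6
    · linarith
    · have hRpos : 0 < R := lt_trans (by positivity) h6
      have hC2 : ∀ d ∈ S, d^(5:ℕ) ≤ 4000 * R^2 * u^(3:ℕ) := by
        intro d hd
        refine le_trans (hkey d hd) ?_
        have h1 : R + 2*t₀ ≤ 2*R := by linarith [ht₀u]
        have h2 : (R + 2*t₀)^2 ≤ (2*R)^2 := by nlinarith [ht₀pos]
        have h3 : (R + 2*t₀)^2 * v y₀ ≤ (2*R)^2 * u^(3:ℕ) := by
          apply mul_le_mul h2 hv₀u hv₀pos.le (by positivity)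
        nlinarith
      have hq : ∀ d ∈ S, d ≤ (4000 * R^2 * u^(3:ℕ)) ^ ((1:ℝ)/(5:ℕ)) := by
        rintro d hd
        obtain ⟨y', hy', x, hx, hdx⟩ := hd
        have hd0 : (0:ℝ) ≤ d := hdx ▸ dist_nonneg
        exact rpow_lb hd0 5 (by norm_num) (hC2 d ⟨y', hy', x, hx, hdx⟩)
      have hRq : R ≤ (4000 * R^2 * u^(3:ℕ)) ^ ((1:ℝ)/(5:ℕ)) := csSup_le hSne hq
      have hR5 : R^(5:ℕ) ≤ 4000 * R^2 * u^(3:ℕ) := by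
        have h1 := pow_le_pow_left₀ hR0 hRq 5
        rwa [← Real.rpow_natCast ((4000 * R^2 * u^(3:ℕ)) ^ ((1:ℝ)/(5:ℕ))) 5,
          ← Real.rpow_mul (by positivity), show ((1:ℝ)/(5:ℕ)) * (5:ℕ) = 1 by norm_num,
          Real.rpow_one] at h1
      have hR3 : R^(3:ℕ) ≤ 4000 * u^(3:ℕ) := by
        have h2 : R^(5:ℕ) = R^(3:ℕ) * R^2 := by ring
        rw [h2] at hR5
        have := le_of_mul_le_mul_right (by linarith : R^(3:ℕ) * R^2 ≤ (4000 * u^(3:ℕ)) * R^2)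
          (by positivity : (0:ℝ) < R^2)
        linarith [this]
      apply (pow_le_pow_iff_left₀ hR0 (by positivity) (by norm_num : (3:ℕ) ≠ 0)).1
      calc R^(3:ℕ) ≤ 4000 * u^(3:ℕ) := hR3
        _ ≤ (16*u)^(3:ℕ) := by nlinarith [pow_pos hupos 3]
  -- lower bound on every cell volume
  have hvlow : ∀ y' ∈ Y, u^(3:ℕ) / (10:ℝ)^10 ≤ v y' := by
    intro y' hy'
    have hvpos' : 0 < v y' := hvpos y' hy'
    set ty : ℝ := (16 * v y') ^ ((1:ℝ)/3) with htydef
    have htypos : 0 < ty := Real.rpow_pos_of_pos (by linarith) _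
    have hty3 : ty ^ (3:ℕ) = 16 * v y' := by
      rw [htydef, ← Real.rpow_natCast ((16 * v y') ^ ((1:ℝ)/3)) 3,
        ← Real.rpow_mul (by linarith)]
      norm_num
    have htyu : ty ≤ 81 * u := by
      apply (pow_le_pow_iff_left₀ htypos.le (by positivity) (by norm_num : (3:ℕ) ≠ 0)).1
      rw [hty3]
      have h1 : v y' ≤ 8 * R^3 := hvle y' hy'
      have h2 : R^3 ≤ 4096 * u^3 := by
        have h2a := pow_le_pow_left₀ hR0 hR16 3
        nlinarith [h2a]
      have h3 : (81*u)^(3:ℕ) = 531441 * u^3 := by ring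
      rw [h3]
      nlinarith
    have hty1 : ty ≤ 1 := by linarith [huval]
    have hs'y : Metric.infDist y' (↑(Y.erase y') : Set E3) ≤ 2*ty := by
      apply erase_infDist_le (hYQ hy') htypos hty1
      have : ty^(3:ℕ)/8 = 2 * v y' := by rw [hty3]; ring
      rw [this]
      show v y' < 2 * v y'
      linarith
    have hcosty : quantE (Y.erase y') ≤ quantE Y + (R + 2*ty)^2 * v y' := by
      apply quantE_erase_le hy' (by omega) (by positivity)
      intro x hx
      have h1 : Metric.infDist x (↑(Y.erase y') : Set E3)
          ≤ Metric.infDist y' (↑(Y.erase y') : Set E3) + dist x y' :=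
        infDist_le_infDist_add_dist
      have h2 : dist x y' ≤ R := hRub y' hy' x hx
      have h3 : Metric.infDist x (↑(Y.erase y') : Set E3) ≤ R + 2*ty := by linarith
      exact pow_le_pow_left₀ infDist_nonneg h3 2
    have hecard' : (Y.erase y').card = n - 1 := by
      rw [Finset.card_erase_of_mem hy', hcard]
    have heQ' : (↑(Y.erase y') : Set E3) ⊆ Qcube := by
      refine subset_trans ?_ hYQ
      exact_mod_cast Finset.coe_subset.2 (Finset.erase_subset _ _)
    have hene' : (Y.erase y').Nonempty := by
      rw [← Finset.card_pos, hecard']; omega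
    obtain ⟨w, hwQ, hwfar⟩ : ∃ w ∈ Qcube, ∀ z ∈ Y.erase y', u/2 ≤ dist w z := by
      apply exists_far _ (by positivity)
      rw [hecard']
      have hc : ((n-1 : ℕ) : ℝ) = (n:ℝ) - 1 := by
        have h1 : (1:ℕ) ≤ n := by omega
        push_cast [Nat.cast_sub h1]
        ring
      rw [hc]
      have h2 : (2*(u/2))^3 = u^(3:ℕ) := by ring
      rw [h2, hu3, mul_one_div, div_lt_one hnpos]
      linarith
    obtain ⟨p, hpQ, hpe, hple⟩ := quantE_insert_lt heQ' hene' hwQ (by positivity : (0:ℝ) < u/2) hwfar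
    have hZcard : (insert p (Y.erase y')).card = n := by
      rw [Finset.card_insert_of_notMem hpe, hecard']; omega
    have hZQ : (↑(insert p (Y.erase y')) : Set E3) ⊆ Qcube := by
      rw [Finset.coe_insert]
      exact Set.insert_subset hpQ heQ'
    have hmin' := hmin _ hZQ hZcard
    have h5 : (u/2) ^ 5 / 1000 ≤ (R + 2*ty)^2 * v y' := by linarith
    have hC : (R + 2*ty)^2 ≤ 31684 * u^2 := by nlinarith [hR16, htyu, hR0, htypos, hupos]
    have h6 : (u/2)^5/1000 = u^5/32000 := by ring
    rw [h6] at h5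
    have h7 : (R + 2*ty)^2 * v y' ≤ 31684 * u^2 * v y' := by
      apply mul_le_mul_of_nonneg_right hC hvpos'.le
    have h8 : u^5/32000 ≤ 31684 * u^2 * v y' := by linarith
    -- v y' ≥ u^3 / (32000*31684) ≥ u^3/10^10
    have h9 : u^(3:ℕ) / (10:ℝ)^10 ≤ u^(3:ℕ)/(32000*31684) := by
      apply div_le_div_of_nonneg_left (by positivity) (by norm_num) (by norm_num)
    refine le_trans h9 ?_
    rw [div_le_iff₀ (by norm_num : (0:ℝ) < 32000*31684)]
    have h10 : u^5 = u^(3:ℕ) * u^2 := by ring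
    rw [h10] at h8
    nlinarith [pow_pos hupos 2, hvpos']
  -- neighbor cells are contained in the box of side 6R around y
  set W : Set E3 := Box (fun i => y i - 3*R) (fun i => y i + 3*R) with hW
  have hTsub : ∀ y' ∈ T, vorCell Y y' ⊆ W := by
    intro y' hy'T
    rw [hT, Finset.mem_filter] at hy'T
    obtain ⟨hy'Y, _, x₀, hx₀1, hx₀2⟩ := hy'T
    have hdyy' : dist y' y ≤ 2*R := by
      calc dist y' y ≤ dist y' x₀ + dist x₀ y := dist_triangle y' x₀ y
        _ ≤ R + R := by
            rw [dist_comm y' x₀]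
            gcongr
            · exact hRub y' hy'Y x₀ hx₀1
            · exact hRub y hyY x₀ hx₀2
        _ = 2*R := by ring
    intro x hx
    intro i
    have h1 : |x i - y' i| ≤ dist x y' := coord_dist_le x y' i
    have h2 : |y' i - y i| ≤ dist y' y := coord_dist_le y' y i
    have h3 : dist x y' ≤ R := hRub y' hy'Y x hx
    rw [Set.mem_Icc]
    show y i - 3*R ≤ x i ∧ x i ≤ y i + 3*R
    rw [abs_le] at h1 h2
    constructor
    · linarith [h1.1, h2.1]
    · linarith [h1.2, h2.2]
  -- sum of neighbor cell volumes
  have hsumT : ∑ y' ∈ T, volume (vorCell Y y') ≤ volume W := by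
    rw [← measure_biUnion_finset₀]
    · exact measure_mono (Set.iUnion₂_subset hTsub)
    · intro a ha b hb hab
      exact volume_inter_vorCell (by exact_mod_cast hTY (by exact_mod_cast ha))
        (by exact_mod_cast hTY (by exact_mod_cast hb)) hab
    · exact fun b _ => (measurableSet_vorCell Y b).nullMeasurableSet
  have hWvol : volume W = ENNReal.ofReal ((6*R)^3) := by
    rw [hW, volume_Box, Fin.prod_univ_three]
    have : ∀ i : Fin 3, (y i + 3*R - (y i - 3*R)) = 6*R := fun i => by ring
    rw [this 0, this 1, this 2, ← ENNReal.ofReal_mul (by positivity),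
      ← ENNReal.ofReal_mul (by positivity)]
    congr 1
    ring
  have hsumT' : ∑ y' ∈ T, v y' ≤ 216 * R^3 := by
    have h1 : (∑ y' ∈ T, volume (vorCell Y y')).toReal ≤ (ENNReal.ofReal ((6*R)^3)).toReal := by
      apply ENNReal.toReal_mono ENNReal.ofReal_ne_top
      rw [← hWvol]
      exact hsumT
    rw [ENNReal.toReal_sum (fun y' _ => volume_vorCell_ne_top Y y'),
      ENNReal.toReal_ofReal (by positivity)] at h1
    calc ∑ y' ∈ T, v y' ≤ (6*R)^3 := h1
      _ = 216 * R^3 := by ring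
  -- count
  have hcount : (T.card : ℝ) * (u^(3:ℕ)/(10:ℝ)^10) ≤ 216 * R^3 := by
    calc (T.card : ℝ) * (u^(3:ℕ)/(10:ℝ)^10) = ∑ _y' ∈ T, u^(3:ℕ)/(10:ℝ)^10 := by
          rw [Finset.sum_const, nsmul_eq_mul]
      _ ≤ ∑ y' ∈ T, v y' := Finset.sum_le_sum (fun y' hy' => hvlow y' (hTY hy'))
      _ ≤ 216 * R^3 := hsumT'
  have hfinal : (T.card : ℝ) ≤ (10:ℝ)^16 := by
    have hR3 : R^3 ≤ 4096 * u^(3:ℕ) := by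
      have h2a := pow_le_pow_left₀ hR0 hR16 3
      nlinarith [h2a]
    have h1 : (T.card : ℝ) * (u^(3:ℕ)/(10:ℝ)^10) ≤ 216 * 4096 * u^(3:ℕ) := by nlinarith
    have h2 : (T.card : ℝ) * u^(3:ℕ) ≤ 216 * 4096 * (10:ℝ)^10 * u^(3:ℕ) := by
      have h3 : (0:ℝ) < (10:ℝ)^10 := by norm_num
      nlinarith
    have h4 : (T.card : ℝ) ≤ 216 * 4096 * (10:ℝ)^10 :=
      le_of_mul_le_mul_right h2 (pow_pos hupos 3)
    calc (T.card : ℝ) ≤ 216 * 4096 * (10:ℝ)^10 := h4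
      _ ≤ (10:ℝ)^16 := by norm_num
  linarith
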